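/- Work with formal power series over ℝ. Let E ∈ ℝ[[x]] satisfy E = 2·exp( x·E² / (1 + x·E) ) − 1, and let D ∈ ℝ[[x, w]] satisfy D = (1 + w)·exp( x·E·D / (1 + x·E) ) − 1. Suppose B ∈ ℝ[[x, w]] satisfies B(x, 0) = 0 and w·∂B/∂w = x·w·exp( x·E·D / (1 + x·E) ). Then B = x·( D − (x·E/(1 + x·E))·D·(1 + D/2) ). -/

import Mathlib

/-- The formal exponential of a multivariate formal power series.  For a series `S`
with zero constant term this agrees with `Σ_{n≥0} Sⁿ/n!`, since the coefficient of a
monomial `m` in `Sⁿ` vanishes whenever `n` exceeds the total degree of `m`. -/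
noncomputable def formalExp {σ : Type*} (S : MvPowerSeries σ ℝ) : MvPowerSeries σ ℝ :=
  fun m => ∑ n ∈ Finset.range ((m.sum fun _ e => e) + 1),
    MvPowerSeries.coeff (R := ℝ) m (S ^ n) / (n.factorial : ℝ)

/-- The formal partial derivative with respect to the second variable `w` of a
formal power series in `ℝ[[x,w]]`:
`∂_w Σ c_{a,b} xᵃ wᵇ = Σ (b+1)·c_{a,b+1} xᵃ wᵇ`. -/
noncomputable def pderivW (B : MvPowerSeries (Fin 2) ℝ) : MvPowerSeries (Fin 2) ℝ :=
  fun m => ((m 1 : ℝ) + 1) * MvPowerSeries.coeff (R := ℝ) (m + Finsupp.single 1 1) B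

open MvPowerSeries Finset

abbrev R2 := MvPowerSeries (Fin 2) ℝ

lemma coeff_pderivW (B : R2) (m : Fin 2 →₀ ℕ) :
    MvPowerSeries.coeff (R := ℝ) m (pderivW B)
      = ((m 1 : ℝ) + 1) * MvPowerSeries.coeff (R := ℝ) (m + Finsupp.single 1 1) B := rfl

local notation "e1" => Finsupp.single (1 : Fin 2) (1 : ℕ)

lemma key1 (A B : R2) (m : Fin 2 →₀ ℕ) :
    ∑ p ∈ antidiagonal m,
        MvPowerSeries.coeff (R := ℝ) p.1 (pderivW A) * MvPowerSeries.coeff (R := ℝ) p.2 B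
      = ∑ q ∈ antidiagonal (m + e1),
          (q.1 1 : ℝ) * (MvPowerSeries.coeff (R := ℝ) q.1 A * MvPowerSeries.coeff (R := ℝ) q.2 B) := by
  classical
  have hfilter : ∀ q ∈ antidiagonal (m + e1),
      (q.1 1 : ℝ) * (MvPowerSeries.coeff (R := ℝ) q.1 A * MvPowerSeries.coeff (R := ℝ) q.2 B) ≠ 0 →
      (fun q : (Fin 2 →₀ ℕ) × (Fin 2 →₀ ℕ) => q.1 1 ≠ 0) q := by
    intro q _ hq h0
    simp [h0] at hq
  rw [← Finset.sum_filter_of_ne hfilter]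
  refine Finset.sum_nbij' (i := fun p => (p.1 + e1, p.2)) (j := fun q => (q.1 - e1, q.2))
    ?_ ?_ ?_ ?_ ?_
  · intro p hp
    rw [Finset.HasAntidiagonal.mem_antidiagonal] at hp
    simp only [Finset.mem_filter, Finset.HasAntidiagonal.mem_antidiagonal]
    constructor
    · rw [add_right_comm, hp]
    · simp [Finsupp.add_apply]
  · intro q hq
    simp only [Finset.mem_filter, Finset.HasAntidiagonal.mem_antidiagonal] at hq
    rw [Finset.HasAntidiagonal.mem_antidiagonal]
    ext a
    have h1 := DFunLike.congr_fun hq.1 a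
    simp only [Finsupp.add_apply] at h1 ⊢
    rw [Finsupp.tsub_apply]
    rcases eq_or_ne a 1 with rfl | ha
    · simp only [Finsupp.single_eq_same] at h1 ⊢
      omega
    · simp only [Finsupp.single_eq_of_ne ha] at h1 ⊢
      omega
  · intro p _
    show (p.1 + e1 - e1, p.2) = p
    rw [add_tsub_cancel_right]
  · intro q hq
    simp only [Finset.mem_filter, Finset.HasAntidiagonal.mem_antidiagonal] at hq
    have hle : e1 ≤ q.1 := by
      rw [Finsupp.single_le_iff]
      omega
    show (q.1 - e1 + e1, q.2) = q
    rw [tsub_add_cancel_of_le hle]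
  · intro p _
    rw [coeff_pderivW]
    have h : ((p.1 + e1) 1 : ℕ) = p.1 1 + 1 := by simp
    rw [h]
    push_cast
    ring

lemma key2 (A B : R2) (m : Fin 2 →₀ ℕ) :
    ∑ p ∈ antidiagonal m,
        MvPowerSeries.coeff (R := ℝ) p.1 A * MvPowerSeries.coeff (R := ℝ) p.2 (pderivW B)
      = ∑ q ∈ antidiagonal (m + e1),
          (q.2 1 : ℝ) * (MvPowerSeries.coeff (R := ℝ) q.1 A * MvPowerSeries.coeff (R := ℝ) q.2 B) := by
  classical
  have hfilter : ∀ q ∈ antidiagonal (m + e1),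
      (q.2 1 : ℝ) * (MvPowerSeries.coeff (R := ℝ) q.1 A * MvPowerSeries.coeff (R := ℝ) q.2 B) ≠ 0 →
      (fun q : (Fin 2 →₀ ℕ) × (Fin 2 →₀ ℕ) => q.2 1 ≠ 0) q := by
    intro q _ hq h0
    simp [h0] at hq
  rw [← Finset.sum_filter_of_ne hfilter]
  refine Finset.sum_nbij' (i := fun p => (p.1, p.2 + e1)) (j := fun q => (q.1, q.2 - e1))
    ?_ ?_ ?_ ?_ ?_
  · intro p hp
    rw [Finset.HasAntidiagonal.mem_antidiagonal] at hp
    simp only [Finset.mem_filter, Finset.HasAntidiagonal.mem_antidiagonal]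
    constructor
    · rw [← add_assoc, hp]
    · simp [Finsupp.add_apply]
  · intro q hq
    simp only [Finset.mem_filter, Finset.HasAntidiagonal.mem_antidiagonal] at hq
    rw [Finset.HasAntidiagonal.mem_antidiagonal]
    ext a
    have h1 := DFunLike.congr_fun hq.1 a
    simp only [Finsupp.add_apply] at h1 ⊢
    rw [Finsupp.tsub_apply]
    rcases eq_or_ne a 1 with rfl | ha
    · simp only [Finsupp.single_eq_same] at h1 ⊢
      omega
    · simp only [Finsupp.single_eq_of_ne ha] at h1 ⊢
      omega
  · intro p _
    show (p.1, p.2 + e1 - e1) = p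
    rw [add_tsub_cancel_right]
  · intro q hq
    simp only [Finset.mem_filter, Finset.HasAntidiagonal.mem_antidiagonal] at hq
    have hle : e1 ≤ q.2 := by
      rw [Finsupp.single_le_iff]
      omega
    show (q.1, q.2 - e1 + e1) = q
    rw [tsub_add_cancel_of_le hle]
  · intro p _
    rw [coeff_pderivW]
    have h : ((p.2 + e1) 1 : ℕ) = p.2 1 + 1 := by simp
    rw [h]
    push_cast
    ring

lemma pderivW_mul (A B : R2) :
    pderivW (A * B) = pderivW A * B + A * pderivW B := by
  classical
  ext m
  rw [map_add, coeff_pderivW, MvPowerSeries.coeff_mul, MvPowerSeries.coeff_mul,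
    MvPowerSeries.coeff_mul, key1, key2, ← Finset.sum_add_distrib, Finset.mul_sum]
  refine Finset.sum_congr rfl fun q hq => ?_
  rw [Finset.HasAntidiagonal.mem_antidiagonal] at hq
  have h1 : q.1 1 + q.2 1 = m 1 + 1 := by
    have := DFunLike.congr_fun hq 1
    simpa [Finsupp.add_apply] using this
  have h2 : (q.1 1 : ℝ) + (q.2 1 : ℝ) = (m 1 : ℝ) + 1 := by exact_mod_cast h1
  linear_combination (-(MvPowerSeries.coeff (R := ℝ) q.1 A * MvPowerSeries.coeff (R := ℝ) q.2 B)) * h2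

lemma pderivW_add (A B : R2) : pderivW (A + B) = pderivW A + pderivW B := by
  ext m
  rw [map_add, coeff_pderivW, coeff_pderivW, coeff_pderivW, map_add]
  ring

lemma pderivW_C (c : ℝ) : pderivW (MvPowerSeries.C (σ := Fin 2) (R := ℝ) c) = 0 := by
  ext m
  rw [coeff_pderivW, MvPowerSeries.coeff_C]
  rw [if_neg, map_zero, mul_zero]
  intro h
  have := DFunLike.congr_fun h 1
  simp [Finsupp.add_apply] at this

lemma pderivW_one : pderivW (1 : R2) = 0 := by
  have : (1 : R2) = MvPowerSeries.C (σ := Fin 2) (R := ℝ) 1 := by simp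
  rw [this, pderivW_C]

lemma pderivW_zero : pderivW (0 : R2) = 0 := by
  have h := pderivW_C 0
  rwa [map_zero] at h

lemma pderivW_X0 : pderivW (MvPowerSeries.X (0 : Fin 2) : R2) = 0 := by
  ext m
  rw [coeff_pderivW, MvPowerSeries.coeff_X]
  rw [if_neg, mul_zero, map_zero]
  intro h
  have := DFunLike.congr_fun h 1
  simp [Finsupp.add_apply, Finsupp.single_apply] at this

lemma pderivW_X1 : pderivW (MvPowerSeries.X (1 : Fin 2) : R2) = 1 := by
  ext m
  rw [coeff_pderivW, MvPowerSeries.coeff_X, MvPowerSeries.coeff_one]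
  rcases eq_or_ne m 0 with rfl | hm
  · rw [if_pos (by simp), if_pos rfl]
    simp
  · rw [if_neg, if_neg hm, mul_zero]
    intro h
    apply hm
    have : m + e1 - e1 = e1 - e1 := by rw [h]
    simpa using this

lemma pderivW_sub (A B : R2) : pderivW (A - B) = pderivW A - pderivW B := by
  ext m
  rw [map_sub, coeff_pderivW, coeff_pderivW, coeff_pderivW, map_sub]
  ring

lemma pderivW_sum {α : Type*} (s : Finset α) (f : α → R2) :
    pderivW (∑ i ∈ s, f i) = ∑ i ∈ s, pderivW (f i) := by
  classical
  induction s using Finset.induction_on with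
  | empty => simp [pderivW_zero]
  | insert _ _ h ih => rw [Finset.sum_insert h, Finset.sum_insert h, pderivW_add, ih]

lemma pderivW_pow (A : R2) (n : ℕ) :
    pderivW (A ^ (n + 1)) = (n + 1 : ℕ) * A ^ n * pderivW A := by
  induction n with
  | zero => simp [pderivW_mul, pow_succ]
  | succ n ih =>
    rw [pow_succ, pderivW_mul, ih]
    push_cast
    ring

lemma coeff_formalExp (S : R2) (m : Fin 2 →₀ ℕ) :
    MvPowerSeries.coeff (R := ℝ) m (formalExp S)
      = ∑ n ∈ Finset.range ((m.sum fun _ e => e) + 1),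
          MvPowerSeries.coeff (R := ℝ) m (S ^ n) / (n.factorial : ℝ) := rfl

def deg (m : Fin 2 →₀ ℕ) : ℕ := m.sum fun _ e => e

lemma deg_add (p q : Fin 2 →₀ ℕ) : deg (p + q) = deg p + deg q :=
  Finsupp.sum_add_index' (fun _ => rfl) (fun _ _ _ => rfl)

lemma deg_eq_zero {p : Fin 2 →₀ ℕ} (h : deg p = 0) : p = 0 := by
  ext a
  by_cases ha : a ∈ p.support
  · exact (Finset.sum_eq_zero_iff.mp h a ha)
  · simpa using Finsupp.notMem_support_iff.mp ha

lemma deg_mono {p m : Fin 2 →₀ ℕ} (h : p ≤ m) : deg p ≤ deg m := by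
  obtain ⟨c, rfl⟩ := le_iff_exists_add.mp h
  rw [deg_add]; omega

lemma coeff_pow_eq_zero {S : R2} (hS : MvPowerSeries.constantCoeff (σ := Fin 2) (R := ℝ) S = 0) :
    ∀ (n : ℕ) (m : Fin 2 →₀ ℕ), deg m < n → MvPowerSeries.coeff (R := ℝ) m (S ^ n) = 0 := by
  classical
  intro n
  induction n with
  | zero => intro m hm; omega
  | succ n ih =>
    intro m hm
    rw [pow_succ, mul_comm, MvPowerSeries.coeff_mul]
    refine Finset.sum_eq_zero fun p hp => ?_
    rw [Finset.HasAntidiagonal.mem_antidiagonal] at hp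
    rcases eq_or_ne p.1 0 with h0 | h0
    · rw [h0]
      rw [MvPowerSeries.coeff_zero_eq_constantCoeff, hS, zero_mul]
    · have hdeg : deg p.1 + deg p.2 = deg m := by rw [← deg_add, hp]
      have h1 : 1 ≤ deg p.1 := by
        rcases Nat.eq_zero_or_pos (deg p.1) with h | h
        · exact absurd (deg_eq_zero h) h0
        · exact h
      rw [ih p.2 (by omega), mul_zero]

lemma coeff_formalExp_stable {S : R2}
    (hS : MvPowerSeries.constantCoeff (σ := Fin 2) (R := ℝ) S = 0) (m : Fin 2 →₀ ℕ) {N : ℕ}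
    (hN : deg m ≤ N) :
    MvPowerSeries.coeff (R := ℝ) m (formalExp S)
      = ∑ n ∈ Finset.range (N + 1), MvPowerSeries.coeff (R := ℝ) m (S ^ n) / (n.factorial : ℝ) := by
  rw [coeff_formalExp S m]
  refine Finset.sum_subset (by intro k hk; simp at hk ⊢; exact by unfold deg at hN; omega) ?_
  intro k hk hk2
  simp only [Finset.mem_range] at hk hk2
  have : deg m < k := by unfold deg at *; omega
  rw [coeff_pow_eq_zero hS k m this, zero_div]

lemma coeff_mul_congr_left (A A' B : R2) (m : Fin 2 →₀ ℕ)
    (h : ∀ p ≤ m, MvPowerSeries.coeff (R := ℝ) p A = MvPowerSeries.coeff (R := ℝ) p A') :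
    MvPowerSeries.coeff (R := ℝ) m (A * B) = MvPowerSeries.coeff (R := ℝ) m (A' * B) := by
  classical
  rw [MvPowerSeries.coeff_mul, MvPowerSeries.coeff_mul]
  refine Finset.sum_congr rfl fun p hp => ?_
  rw [Finset.HasAntidiagonal.mem_antidiagonal] at hp
  rw [h p.1 (le_iff_exists_add.mpr ⟨p.2, hp.symm⟩)]

lemma coeff_mul_eq_zero_left (A B : R2) (m : Fin 2 →₀ ℕ)
    (h : ∀ p ≤ m, MvPowerSeries.coeff (R := ℝ) p A = 0) :
    MvPowerSeries.coeff (R := ℝ) m (A * B) = 0 := by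
  classical
  rw [MvPowerSeries.coeff_mul]
  refine Finset.sum_eq_zero fun p hp => ?_
  rw [Finset.HasAntidiagonal.mem_antidiagonal] at hp
  rw [h p.1 (le_iff_exists_add.mpr ⟨p.2, hp.symm⟩), zero_mul]

lemma coeff_mul_eq_zero_right (A B : R2) (m : Fin 2 →₀ ℕ)
    (h : ∀ q ≤ m, MvPowerSeries.coeff (R := ℝ) q B = 0) :
    MvPowerSeries.coeff (R := ℝ) m (A * B) = 0 := by
  classical
  rw [MvPowerSeries.coeff_mul]
  refine Finset.sum_eq_zero fun p hp => ?_
  rw [Finset.HasAntidiagonal.mem_antidiagonal] at hp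
  rw [h p.2 (le_iff_exists_add.mpr ⟨p.1, by rw [← hp, add_comm]⟩), mul_zero]

lemma coeff_X_mul' (s : Fin 2) (G : R2) (m : Fin 2 →₀ ℕ) :
    MvPowerSeries.coeff (R := ℝ) m (MvPowerSeries.X s * G)
      = if Finsupp.single s 1 ≤ m then MvPowerSeries.coeff (R := ℝ) (m - Finsupp.single s 1) G
        else 0 := by
  classical
  rw [MvPowerSeries.X, MvPowerSeries.coeff_monomial_mul]
  split_ifs <;> simp

noncomputable def expP (S : R2) (N : ℕ) : R2 :=
  ∑ n ∈ Finset.range (N + 1), MvPowerSeries.C (σ := Fin 2) (R := ℝ) ((n.factorial : ℝ)⁻¹) * S ^ n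

lemma coeff_expP (S : R2) (N : ℕ) (m : Fin 2 →₀ ℕ) :
    MvPowerSeries.coeff (R := ℝ) m (expP S N)
      = ∑ n ∈ Finset.range (N + 1), MvPowerSeries.coeff (R := ℝ) m (S ^ n) / (n.factorial : ℝ) := by
  rw [expP, map_sum]
  refine Finset.sum_congr rfl fun n _ => ?_
  rw [MvPowerSeries.coeff_C_mul, div_eq_inv_mul]

lemma coeff_formalExp_expP {S : R2}
    (hS : MvPowerSeries.constantCoeff (σ := Fin 2) (R := ℝ) S = 0) (m : Fin 2 →₀ ℕ) {N : ℕ}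
    (hN : deg m ≤ N) :
    MvPowerSeries.coeff (R := ℝ) m (formalExp S) = MvPowerSeries.coeff (R := ℝ) m (expP S N) := by
  rw [coeff_expP, coeff_formalExp_stable hS m hN]

lemma pderivW_expP (S : R2) (N : ℕ) :
    pderivW (expP S (N + 1)) = expP S N * pderivW S := by
  rw [expP, pderivW_sum, Finset.sum_range_succ']
  have h0 : pderivW (MvPowerSeries.C (σ := Fin 2) (R := ℝ) ((Nat.factorial 0 : ℝ)⁻¹) * S ^ 0) = 0 := by
    rw [pow_zero, mul_one, pderivW_C]
  rw [h0, add_zero, expP, Finset.sum_mul]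
  refine Finset.sum_congr rfl fun n _ => ?_
  rw [pderivW_mul, pderivW_C, zero_mul, zero_add, pderivW_pow]
  have hC : ((n + 1 : ℕ) : R2) = MvPowerSeries.C (σ := Fin 2) (R := ℝ) ((n + 1 : ℕ) : ℝ) := by
    rw [map_natCast]
  rw [hC, ← mul_assoc, ← mul_assoc, ← map_mul]
  have : ((n + 1).factorial : ℝ)⁻¹ * ((n + 1 : ℕ) : ℝ) = ((n.factorial : ℝ))⁻¹ := by
    rw [Nat.factorial_succ]
    push_cast
    rw [mul_inv]
    field_simp
  rw [this]

lemma deg_e1 : deg (Finsupp.single (1 : Fin 2) (1 : ℕ)) = 1 := by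
  unfold deg
  rw [Finsupp.sum_single_index rfl]

lemma pderivW_formalExp {S : R2}
    (hS : MvPowerSeries.constantCoeff (σ := Fin 2) (R := ℝ) S = 0) :
    pderivW (formalExp S) = formalExp S * pderivW S := by
  ext m
  rw [coeff_pderivW,
    coeff_formalExp_expP hS (m + e1) (N := deg m + 1) (by rw [deg_add, deg_e1]),
    ← coeff_pderivW (expP S (deg m + 1)) m, pderivW_expP]
  exact coeff_mul_congr_left _ _ _ _ fun p hp =>
    (coeff_formalExp_expP hS p (deg_mono hp)).symm


lemma constantCoeff_X_mul (s : Fin 2) (G : R2) :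
    MvPowerSeries.constantCoeff (σ := Fin 2) (R := ℝ) (MvPowerSeries.X s * G) = 0 := by
  rw [← MvPowerSeries.coeff_zero_eq_constantCoeff]
  exact MvPowerSeries.coeff_zero_X_mul G s

lemma eq_of_slices (A B : R2)
    (h0 : ∀ m : Fin 2 →₀ ℕ, m 1 = 0 →
      MvPowerSeries.coeff (R := ℝ) m A = MvPowerSeries.coeff (R := ℝ) m B)
    (hd : (MvPowerSeries.X 1 : R2) * pderivW A = MvPowerSeries.X 1 * pderivW B) :
    A = B := by
  ext m
  rcases Nat.eq_zero_or_pos (m 1) with h | h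
  · exact h0 m h
  · have hle : Finsupp.single (1 : Fin 2) 1 ≤ m := Finsupp.single_le_iff.mpr h
    have hc := congrArg (MvPowerSeries.coeff (R := ℝ) m) hd
    rw [coeff_X_mul', coeff_X_mul', if_pos hle, if_pos hle, coeff_pderivW, coeff_pderivW,
      tsub_add_cancel_of_le hle] at hc
    have hne : (((m - e1) 1 : ℝ) + 1) ≠ 0 := by positivity
    exact mul_left_cancel₀ hne hc

lemma pderivW_sq (A : R2) : pderivW (A ^ 2) = 2 * A * pderivW A := by
  have h := pderivW_pow A 1
  norm_num at h
  exact h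

lemma pderivW_two : pderivW (2 : R2) = 0 := by
  have h : (2 : R2) = 1 + 1 := one_add_one_eq_two.symm
  rw [h, pderivW_add, pderivW_one, add_zero]

/-- Lemma 4.2 (rooted 2-connected SP graphs):  if `B(x,0) = 0` and
`w·∂B/∂w = x·w·exp(x·E·D/(1+x·E))`, then
`B = x·(D − (xE/(1+xE))·D·(1 + D/2))`, in `ℝ[[x,w]]`. -/
theorem rooted_two_connected_sp_generating_function
    (x w : MvPowerSeries (Fin 2) ℝ)
    (hx : x = MvPowerSeries.X 0) (hw : w = MvPowerSeries.X 1)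
    (E D B : MvPowerSeries (Fin 2) ℝ)
    (hE : E = 2 * formalExp (x * E ^ 2 * (1 + x * E)⁻¹) - 1)
    (hD : D = (1 + w) * formalExp (x * E * D * (1 + x * E)⁻¹) - 1)
    -- `B(x,0) = 0`: all coefficients with `w`-exponent zero vanish
    (hB0 : ∀ m : Fin 2 →₀ ℕ, m 1 = 0 → MvPowerSeries.coeff (R := ℝ) m B = 0)
    (hBw : w * pderivW B = x * w * formalExp (x * E * D * (1 + x * E)⁻¹)) :
    B = x * (D - x * E * (1 + x * E)⁻¹ * D *
      (1 + MvPowerSeries.C (σ := Fin 2) (R := ℝ) (1 / 2) * D)) := by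
  subst hx hw
  set T : R2 := (1 + MvPowerSeries.X 0 * E)⁻¹ with hT
  set S : R2 := MvPowerSeries.X 0 * E * D * T with hS
  set U : R2 := formalExp S with hU
  set Varg : R2 := MvPowerSeries.X 0 * E ^ 2 * T with hVarg
  set V : R2 := formalExp Varg with hV
  -- basic constant-coefficient facts
  have hTc : MvPowerSeries.constantCoeff (σ := Fin 2) (R := ℝ) (1 + MvPowerSeries.X 0 * E) ≠ 0 := by
    rw [map_add, map_one, constantCoeff_X_mul]
    norm_num
  have hT1 : (1 + MvPowerSeries.X 0 * E) * T = 1 := MvPowerSeries.mul_inv_cancel _ hTc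
  have hSc : MvPowerSeries.constantCoeff (σ := Fin 2) (R := ℝ) S = 0 := by
    have h : S = MvPowerSeries.X 0 * (E * D * T) := by rw [hS]; ring
    rw [h, constantCoeff_X_mul]
  have hVargc : MvPowerSeries.constantCoeff (σ := Fin 2) (R := ℝ) Varg = 0 := by
    have h : Varg = MvPowerSeries.X 0 * (E ^ 2 * T) := by rw [hVarg]; ring
    rw [h, constantCoeff_X_mul]
  -- derivative of T
  have hdT : pderivW T = -(MvPowerSeries.X 0 * pderivW E * T * T) := by
    have h := congrArg pderivW hT1
    rw [pderivW_one, pderivW_mul, pderivW_add, pderivW_one, pderivW_mul, pderivW_X0] at h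
    linear_combination T * h - pderivW T * hT1
  -- derivative of E is zero
  have hdE0 : pderivW E = 0 := by
    have hdVarg : pderivW Varg
        = (0 * E ^ 2 + MvPowerSeries.X 0 * (2 * E * pderivW E)) * T
          + MvPowerSeries.X 0 * E ^ 2 * pderivW T := by
      rw [hVarg, pderivW_mul, pderivW_mul, pderivW_X0, pderivW_sq]
    have hdV : pderivW V = V * pderivW Varg := by
      rw [hV]; exact pderivW_formalExp hVargc
    have h := congrArg pderivW hE
    rw [pderivW_sub, pderivW_mul, pderivW_two, pderivW_one, hdV] at h
    have hfix : pderivW E * (1 - 2 * V * (MvPowerSeries.X 0 * E * T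
        * (2 - MvPowerSeries.X 0 * E * T))) = 0 := by
      linear_combination h + 2 * V * hdVarg + 2 * V * MvPowerSeries.X 0 * E ^ 2 * hdT
    have hc2 : MvPowerSeries.constantCoeff (σ := Fin 2) (R := ℝ)
        (1 - 2 * V * (MvPowerSeries.X 0 * E * T * (2 - MvPowerSeries.X 0 * E * T))) ≠ 0 := by
      have hr : 2 * V * (MvPowerSeries.X 0 * E * T * (2 - MvPowerSeries.X 0 * E * T))
          = MvPowerSeries.X 0 * (2 * V * E * T * (2 - MvPowerSeries.X 0 * E * T)) := by ring
      rw [map_sub, map_one, hr, constantCoeff_X_mul]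
      norm_num
    have hu := MvPowerSeries.mul_inv_cancel _ hc2
    calc pderivW E
        = pderivW E * ((1 - 2 * V * (MvPowerSeries.X 0 * E * T
            * (2 - MvPowerSeries.X 0 * E * T)))
          * (1 - 2 * V * (MvPowerSeries.X 0 * E * T
            * (2 - MvPowerSeries.X 0 * E * T)))⁻¹) := by rw [hu, mul_one]
      _ = (pderivW E * (1 - 2 * V * (MvPowerSeries.X 0 * E * T
            * (2 - MvPowerSeries.X 0 * E * T))))
          * (1 - 2 * V * (MvPowerSeries.X 0 * E * T
            * (2 - MvPowerSeries.X 0 * E * T)))⁻¹ := by ring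
      _ = 0 := by rw [hfix, zero_mul]
  have hdT0 : pderivW T = 0 := by rw [hdT, hdE0]; ring
  -- derivative of S and D
  have hdS : pderivW S = MvPowerSeries.X 0 * E * T * pderivW D := by
    rw [hS, pderivW_mul, pderivW_mul, pderivW_mul, pderivW_X0, hdE0, hdT0]
    ring
  have hdU : pderivW U = U * pderivW S := by
    rw [hU]; exact pderivW_formalExp hSc
  have hdD : pderivW D = U + (1 + MvPowerSeries.X 1)
      * (U * (MvPowerSeries.X 0 * E * T * pderivW D)) := by
    have h := congrArg pderivW hD
    rw [pderivW_sub, pderivW_mul, pderivW_add, pderivW_one, pderivW_X1, hdU, hdS] at h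
    linear_combination h
  have hdDkey : pderivW D * (1 - MvPowerSeries.X 0 * E * T * (1 + D)) = U := by
    linear_combination hdD - MvPowerSeries.X 0 * E * T * pderivW D * hD
  -- D vanishes on the w = 0 slice
  have hD0 : ∀ m : Fin 2 →₀ ℕ, m 1 = 0 → MvPowerSeries.coeff (R := ℝ) m D = 0 := by
    have key : ∀ n : ℕ, ∀ m : Fin 2 →₀ ℕ, m 1 = 0 → m 0 < n →
        MvPowerSeries.coeff (R := ℝ) m D = 0 := by
      intro n
      induction n with
      | zero => intro m _ h; omega
      | succ n ih =>
        intro m hm1 hm0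
        have hSv : ∀ p ≤ m, MvPowerSeries.coeff (R := ℝ) p S = 0 := by
          intro p hp
          rw [hS]
          have hr : MvPowerSeries.X 0 * E * D * T
              = MvPowerSeries.X 0 * (E * T * D) := by ring
          rw [hr, coeff_X_mul']
          split_ifs with hle
          · apply coeff_mul_eq_zero_right
            intro q hq
            apply ih q
            · have a1 := Finsupp.le_def.mp hq (1 : Fin 2)
              have a3 := Finsupp.le_def.mp hp (1 : Fin 2)
              simp only [Finsupp.tsub_apply, Finsupp.single_apply] at a1
              norm_num at a1
              omega
            · have b1 := Finsupp.le_def.mp hq (0 : Fin 2)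
              have b3 := Finsupp.le_def.mp hp (0 : Fin 2)
              have b4 : 1 ≤ p 0 := Finsupp.single_le_iff.mp hle
              simp only [Finsupp.tsub_apply, Finsupp.single_apply] at b1
              norm_num at b1
              omega
          · rfl
        have hUm : MvPowerSeries.coeff (R := ℝ) m U = if m = 0 then 1 else 0 := by
          rw [hU, coeff_formalExp_stable hSc m (le_refl (deg m))]
          rw [Finset.sum_eq_single_of_mem 0 (Finset.mem_range.mpr (by omega))]
          · simp [MvPowerSeries.coeff_one]
          · intro k _ hk
            obtain ⟨j, rfl⟩ := Nat.exists_eq_succ_of_ne_zero hk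
            rw [pow_succ, coeff_mul_eq_zero_right _ _ _ hSv, zero_div]
        have h : MvPowerSeries.coeff (R := ℝ) m D
            = MvPowerSeries.coeff (R := ℝ) m ((1 + MvPowerSeries.X 1) * U - 1) := by rw [← hD]
        have hrw : (1 + MvPowerSeries.X 1) * U - 1 = U + MvPowerSeries.X 1 * U - 1 := by
          ring
        have hw0 : MvPowerSeries.coeff (R := ℝ) m (MvPowerSeries.X 1 * U) = 0 := by
          rw [coeff_X_mul', if_neg]
          rw [Finsupp.single_le_iff]
          omega
        rw [hrw, map_sub, map_add, hUm, hw0, MvPowerSeries.coeff_one] at h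
        rw [h]
        simp
    intro m hm
    exact key (m 0 + 1) m hm (Nat.lt_succ_self _)
  -- derivative of the right-hand side
  have hdR : pderivW (MvPowerSeries.X 0 * (D - MvPowerSeries.X 0 * E * T * D
      * (1 + MvPowerSeries.C (σ := Fin 2) (R := ℝ) (1 / 2) * D))) = MvPowerSeries.X 0 * U := by
    have hhalf : MvPowerSeries.C (σ := Fin 2) (R := ℝ) (1 / 2) * 2 = 1 := by
      have h2 : (2 : R2) = MvPowerSeries.C (σ := Fin 2) (R := ℝ) 2 := (map_ofNat _ 2).symm
      rw [h2, ← map_mul]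
      norm_num
    simp only [pderivW_mul, pderivW_sub, pderivW_add, pderivW_one, pderivW_X0, pderivW_C,
      hdT0, hdE0]
    linear_combination MvPowerSeries.X 0 * hdDkey
      - D * MvPowerSeries.X 0 ^ 2 * E * T * pderivW D * hhalf
  -- conclude by uniqueness
  refine eq_of_slices B _ ?_ ?_
  · intro m hm
    rw [hB0 m hm]
    symm
    rw [coeff_X_mul']
    split_ifs with hle
    · have hG : D - MvPowerSeries.X 0 * E * T * D
          * (1 + MvPowerSeries.C (σ := Fin 2) (R := ℝ) (1 / 2) * D)
          = D * (1 - MvPowerSeries.X 0 * E * T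
            * (1 + MvPowerSeries.C (σ := Fin 2) (R := ℝ) (1 / 2) * D)) := by ring
      rw [hG]
      apply coeff_mul_eq_zero_left
      intro p hp
      apply hD0 p
      have a1 := Finsupp.le_def.mp hp (1 : Fin 2)
      simp only [Finsupp.tsub_apply, Finsupp.single_apply] at a1
      norm_num at a1
      omega
    · rfl
  · rw [hBw, hdR]
    ring
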